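/- The set of nowhere differentiable functions on [0,1]^2 — continuous functions having no finite one-sided directional derivative at any point along any unit vector — is comeager in C([0,1]^2). -/

import Mathlib

set_option maxHeartbeats 1000000
open Set Filter Classical
noncomputable section
namespace S18


def g0 (t : ℝ) : ℝ := |t - round t|

lemma g0_nonneg (t : ℝ) : 0 ≤ g0 t := abs_nonneg _

lemma g0_int (m : ℤ) : g0 (m : ℝ) = 0 := by simp [g0]

lemma g0_le_half (t : ℝ) : g0 t ≤ 1/2 := abs_sub_round t

lemma g0_half (m : ℤ) : g0 ((m : ℝ) + 1/2) = 1/2 := by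
  have h : round ((m : ℝ) + 1/2) = m + 1 := by
    rw [add_comm, round_add_intCast]
    norm_num [round_eq]
    ring
  rw [g0, h]
  push_cast
  rw [show (m:ℝ) + 1/2 - (m + 1) = -(1/2) by ring]
  norm_num

lemma g0_lip (s t : ℝ) : |g0 s - g0 t| ≤ |s - t| := by
  have key : ∀ a b : ℝ, g0 a ≤ |a - b| + g0 b := by
    intro a b
    calc g0 a ≤ |a - (round b : ℝ)| := round_le a (round b)
      _ ≤ |a - b| + |b - round b| := by
          have := abs_sub_le a b ((round b : ℤ) : ℝ)
          simpa using this
      _ = |a - b| + g0 b := rfl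
  rw [abs_sub_le_iff]
  constructor
  · linarith [key s t]
  · have := key t s
    rw [abs_sub_comm] at this
    linarith

lemma g0_cont : Continuous g0 := by
  have : LipschitzWith 1 g0 := by
    apply LipschitzWith.of_dist_le_mul
    intro x y
    simpa [Real.dist_eq] using g0_lip x y
  exact this.continuous

/-- reach lemma -/
lemma reach (t u : ℝ) (hu : 1/2 ≤ |u|) :
    ∃ τ : ℝ, 0 < τ ∧ τ ≤ 2 ∧ 1/4 ≤ |g0 (t + τ * u) - g0 t| := by
  -- find a target w with g0 w ∈ {0, 1/2} "in the direction of u"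
  have hune : u ≠ 0 := by
    intro h; rw [h] at hu; simp at hu; linarith
  -- choose w depending on sign of u and on g0 t
  obtain ⟨w, hw1, hw2, hval⟩ :
      ∃ w : ℝ, 0 < (w - t) / u ∧ (w - t) / u ≤ 2 ∧ 1/4 ≤ |g0 w - g0 t| := by
    rcases le_or_gt (1/4) (g0 t) with hgt | hgt
    · -- target an integer, value 0
      rcases le_or_gt (1/2) u with hupos | huneg
      · refine ⟨((⌊t⌋ + 1 : ℤ) : ℝ), ?_, ?_, ?_⟩
        · apply div_pos _ (by linarith)
          push_cast; linarith [Int.lt_floor_add_one t]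
        · rw [div_le_iff₀ (by linarith)]
          push_cast; linarith [Int.floor_le t]
        · rw [g0_int]
          rw [abs_sub_comm]; rw [abs_of_nonneg (by linarith [g0_nonneg t] : (0:ℝ) ≤ g0 t - 0)]
          linarith
      · have huneg' : u ≤ -(1/2) := by
          rcases abs_cases u with ⟨h1, h2⟩ | ⟨h1, h2⟩ <;> linarith
        refine ⟨((⌈t⌉ - 1 : ℤ) : ℝ), ?_, ?_, ?_⟩
        · apply div_pos_of_neg_of_neg _ (by linarith)
          push_cast; linarith [Int.ceil_lt_add_one t]
        · rw [div_le_iff_of_neg (by linarith)]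
          push_cast; linarith [Int.le_ceil t]
        · rw [g0_int]
          rw [abs_sub_comm]; rw [abs_of_nonneg (by linarith [g0_nonneg t] : (0:ℝ) ≤ g0 t - 0)]
          linarith
    · -- target a half-integer, value 1/2
      rcases le_or_gt (1/2) u with hupos | huneg
      · refine ⟨((⌊t + 1/2⌋ : ℤ) : ℝ) + 1/2, ?_, ?_, ?_⟩
        · apply div_pos _ (by linarith)
          have := Int.lt_floor_add_one (t + 1/2)
          linarith
        · rw [div_le_iff₀ (by linarith)]
          have := Int.floor_le (t + 1/2)
          linarith
        · rw [g0_half]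
          rw [abs_of_nonneg (by linarith [g0_le_half t] : (0:ℝ) ≤ 1/2 - g0 t)]
          linarith
      · have huneg' : u ≤ -(1/2) := by
          rcases abs_cases u with ⟨h1, h2⟩ | ⟨h1, h2⟩ <;> linarith
        refine ⟨((⌈t - 3/2⌉ : ℤ) : ℝ) + 1/2, ?_, ?_, ?_⟩
        · apply div_pos_of_neg_of_neg _ (by linarith)
          have := Int.ceil_lt_add_one (t - 3/2)
          linarith
        · rw [div_le_iff_of_neg (by linarith)]
          have := Int.le_ceil (t - 3/2)
          linarith
        · rw [g0_half]
          rw [abs_of_nonneg (by linarith [g0_le_half t] : (0:ℝ) ≤ 1/2 - g0 t)]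
          linarith
  refine ⟨(w - t) / u, hw1, hw2, ?_⟩
  have : t + (w - t) / u * u = w := by field_simp; ring
  rw [this]; exact hval


abbrev K2 := (Icc (0:ℝ) 1) × (Icc (0:ℝ) 1)




def proj01 (t : ℝ) : Icc (0:ℝ) 1 :=
  ⟨max 0 (min 1 t), ⟨le_max_left _ _, max_le (by norm_num) (min_le_left _ _)⟩⟩

lemma proj01_of_mem {t : ℝ} (h : t ∈ Icc (0:ℝ) 1) : proj01 t = ⟨t, h⟩ := by
  apply Subtype.ext
  simp only [proj01]
  rw [min_eq_right h.2, max_eq_right h.1]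

lemma proj01_cont : Continuous fun t : ℝ => proj01 t := by
  apply Continuous.subtype_mk
  fun_prop

def pt (p : K2) (v : ℝ × ℝ) (h : ℝ) : K2 :=
  (proj01 (p.1.1 + h * v.1), proj01 (p.2.1 + h * v.2))

/-- convexity of the interval -/
lemma seg {x v h b : ℝ} (hx : x ∈ Icc (0:ℝ) 1) (hb : x + b * v ∈ Icc (0:ℝ) 1)
    (h0 : 0 < h) (hhb : h ≤ b) : x + h * v ∈ Icc (0:ℝ) 1 := by
  obtain ⟨hx0, hx1⟩ := hx
  obtain ⟨hb0, hb1⟩ := hb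
  have hbpos : 0 < b := lt_of_lt_of_le h0 hhb
  constructor
  · nlinarith [mul_nonneg (sub_nonneg.2 hhb) hx0, mul_nonneg h0.le hb0]
  · nlinarith [mul_nonneg (sub_nonneg.2 hhb) (sub_nonneg.2 hx1),
      mul_nonneg h0.le (sub_nonneg.2 hb1)]

def AA (n : ℕ) : Set C(K2, ℝ) :=
  {f | ∃ p : K2, ∃ v : ℝ × ℝ, v.1 ^ 2 + v.2 ^ 2 = 1 ∧
    p.1.1 + (1/(n+1)) * v.1 ∈ Icc (0:ℝ) 1 ∧ p.2.1 + (1/(n+1)) * v.2 ∈ Icc (0:ℝ) 1 ∧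
    ∀ h : ℝ, 0 < h → h ≤ 1/(n+1) → |f (pt p v h) - f p| ≤ (n+1) * h}

def SQ : Set (ℝ × ℝ) := {v | v.1 ^ 2 + v.2 ^ 2 = 1}

lemma SQ_compact : IsCompact SQ := by
  have hclosed : IsClosed SQ :=
    isClosed_eq (by fun_prop) continuous_const
  have hbdd : SQ ⊆ Metric.closedBall 0 2 := by
    intro v hv
    have hv' : v.1 ^ 2 + v.2 ^ 2 = 1 := hv
    have h1 : |v.1| ≤ 1 := (sq_le_one_iff_abs_le_one v.1).1 (by nlinarith [sq_nonneg v.2])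
    have h2 : |v.2| ≤ 1 := (sq_le_one_iff_abs_le_one v.2).1 (by nlinarith [sq_nonneg v.1])
    simp only [Metric.mem_closedBall, dist_zero_right]
    rw [Prod.norm_def]
    simp only [Real.norm_eq_abs]
    exact max_le (by linarith) (by linarith)
  exact Metric.isCompact_of_isClosed_isBounded hclosed
    (Metric.isBounded_closedBall.subset hbdd)

lemma pt_cont (h : ℝ) : Continuous fun w : K2 × (ℝ × ℝ) => pt w.1 w.2 h := by
  apply Continuous.prodMk
  · exact proj01_cont.comp (by fun_prop)
  · exact proj01_cont.comp (by fun_prop)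

lemma AA_closed (n : ℕ) : IsClosed (AA n) := by
  haveI : CompactSpace SQ := isCompact_iff_compactSpace.mp SQ_compact
  set a : ℝ := 1/(n+1) with ha
  set c : ℝ := (n:ℝ)+1 with hc
  let B : Set (C(K2,ℝ) × (K2 × SQ)) :=
    {z | (z.2.1.1.1 + a * (z.2.2 : ℝ × ℝ).1 ∈ Icc (0:ℝ) 1) ∧
         (z.2.1.2.1 + a * (z.2.2 : ℝ × ℝ).2 ∈ Icc (0:ℝ) 1) ∧
         ∀ h : ℝ, h ∈ Ioc (0:ℝ) a → |z.1 (pt z.2.1 (z.2.2 : ℝ × ℝ) h) - z.1 z.2.1| ≤ c * h}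
  have hBclosed : IsClosed B := by
    have h1 : IsClosed {z : C(K2,ℝ) × (K2 × SQ) |
        z.2.1.1.1 + a * (z.2.2 : ℝ × ℝ).1 ∈ Icc (0:ℝ) 1} :=
      IsClosed.preimage (f := fun z : C(K2,ℝ) × (K2 × SQ) =>
        z.2.1.1.1 + a * (z.2.2 : ℝ × ℝ).1) (by fun_prop) isClosed_Icc
    have h2 : IsClosed {z : C(K2,ℝ) × (K2 × SQ) |
        z.2.1.2.1 + a * (z.2.2 : ℝ × ℝ).2 ∈ Icc (0:ℝ) 1} :=
      IsClosed.preimage (f := fun z : C(K2,ℝ) × (K2 × SQ) =>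
        z.2.1.2.1 + a * (z.2.2 : ℝ × ℝ).2) (by fun_prop) isClosed_Icc
    have h3 : IsClosed {z : C(K2,ℝ) × (K2 × SQ) |
        ∀ h : ℝ, h ∈ Ioc (0:ℝ) a → |z.1 (pt z.2.1 (z.2.2 : ℝ × ℝ) h) - z.1 z.2.1| ≤ c * h} := by
      have heq : {z : C(K2,ℝ) × (K2 × SQ) |
          ∀ h : ℝ, h ∈ Ioc (0:ℝ) a → |z.1 (pt z.2.1 (z.2.2 : ℝ × ℝ) h) - z.1 z.2.1| ≤ c * h}
          = ⋂ h ∈ Ioc (0:ℝ) a,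
            {z : C(K2,ℝ) × (K2 × SQ) | |z.1 (pt z.2.1 (z.2.2 : ℝ × ℝ) h) - z.1 z.2.1| ≤ c * h} := by
        ext z; simp
      rw [heq]
      apply isClosed_biInter
      intro h _
      have hF : Continuous fun z : C(K2,ℝ) × (K2 × SQ) =>
          z.1 (pt z.2.1 (z.2.2 : ℝ × ℝ) h) - z.1 z.2.1 := by
        apply Continuous.sub
        · exact continuous_eval.comp (continuous_fst.prodMk
            ((pt_cont h).comp ((continuous_snd.fst).prodMk
              (continuous_subtype_val.comp continuous_snd.snd))))
        · exact continuous_eval.comp (continuous_fst.prodMk continuous_snd.fst)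
      exact isClosed_le (continuous_abs.comp hF) continuous_const
    exact IsClosed.inter h1 (IsClosed.inter h2 h3)
  have himg : AA n = Prod.fst '' B := by
    ext f
    constructor
    · rintro ⟨p, v, hv, r1, r2, hb⟩
      exact ⟨(f, (p, ⟨v, hv⟩)), ⟨r1, r2, fun h hh => hb h hh.1 hh.2⟩, rfl⟩
    · rintro ⟨⟨f', w⟩, ⟨r1, r2, hb⟩, rfl⟩
      exact ⟨w.1, (w.2 : ℝ × ℝ), w.2.2, r1, r2, fun h h0 hha => hb h ⟨h0, hha⟩⟩
  rw [himg]
  exact isClosedMap_fst_of_compactSpace B hBclosed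




instance : Nonempty K2 := by
  refine ⟨⟨⟨0, ?_⟩, ⟨0, ?_⟩⟩⟩ <;> constructor <;> norm_num

lemma lip_approx (f : C(K2, ℝ)) {ε : ℝ} (hε : 0 < ε) :
    ∃ P : C(K2, ℝ), ∃ L : ℝ, 0 ≤ L ∧ (∀ x y : K2, |P x - P y| ≤ L * dist x y) ∧
      dist P f ≤ ε := by
  have hucont : UniformContinuous f := CompactSpace.uniformContinuous_of_continuous f.continuous
  rw [Metric.uniformContinuous_iff] at hucont
  obtain ⟨δ, hδ0, hδ⟩ := hucont ε hε
  set C : ℝ := ‖f‖ with hC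
  have hfb : ∀ x : K2, |f x| ≤ C := fun x => f.norm_coe_le_norm x
  set L : ℝ := 2 * C / δ + 1 with hL
  have hC0 : 0 ≤ C := norm_nonneg f
  have hL0 : 0 ≤ L := by positivity
  set P0 : K2 → ℝ := fun x => ⨅ q : K2, (f q + L * dist x q) with hP0
  have hbdd : ∀ x : K2, BddBelow (range fun q : K2 => f q + L * dist x q) := by
    intro x
    refine ⟨-C, ?_⟩
    rintro r ⟨q, rfl⟩
    dsimp only
    have h1 := (abs_le.1 (hfb q)).1
    have h2 : 0 ≤ L * dist x q := by positivity
    linarith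
  have hle : ∀ x : K2, P0 x ≤ f x := by
    intro x
    have h2 := ciInf_le (hbdd x) x
    simp only [dist_self, mul_zero, add_zero] at h2
    exact h2
  have hge : ∀ x : K2, f x - ε ≤ P0 x := by
    intro x
    apply le_ciInf
    intro q
    rcases lt_or_ge (dist x q) δ with hlt | hge'
    · have := hδ (show dist x q < δ by exact hlt)
      rw [Real.dist_eq] at this
      have h1 := (abs_le.1 this.le).2
      have : 0 ≤ L * dist x q := by positivity
      linarith
    · have h1 : L * dist x q ≥ L * δ := by
        apply mul_le_mul_of_nonneg_left hge' hL0
      have hδ' : δ ≠ 0 := ne_of_gt hδ0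
      have h2 : L * δ = 2 * C + δ := by rw [hL]; field_simp
      have h3 := abs_le.1 (hfb q) |>.1
      have h4 := abs_le.1 (hfb x) |>.2
      linarith
  have hlip : ∀ x y : K2, |P0 x - P0 y| ≤ L * dist x y := by
    have key : ∀ x y : K2, P0 x ≤ P0 y + L * dist x y := by
      intro x y
      have : P0 x - L * dist x y ≤ P0 y := by
        apply le_ciInf
        intro q
        have h1 : P0 x ≤ f q + L * dist x q := ciInf_le (hbdd x) q
        have h2 : dist x q ≤ dist x y + dist y q := dist_triangle x y q
        nlinarith [dist_nonneg (x := y) (y := q)]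
      linarith
    intro x y
    rw [abs_sub_le_iff]
    constructor
    · linarith [key x y]
    · have hd : L * dist y x = L * dist x y := by rw [dist_comm]
      linarith [key y x, hd]
  have hcont : Continuous P0 := by
    have : LipschitzWith (Real.toNNReal L) P0 := by
      apply LipschitzWith.of_dist_le_mul
      intro x y
      rw [Real.dist_eq, Real.coe_toNNReal L hL0]
      exact hlip x y
    exact this.continuous
  refine ⟨⟨P0, hcont⟩, L, hL0, hlip, ?_⟩
  rw [ContinuousMap.dist_le hε.le]
  intro x
  rw [Real.dist_eq]
  have := hle x; have := hge x
  rw [abs_le]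
  constructor <;> simp only [ContinuousMap.coe_mk] <;> linarith


lemma abs_sub3 (x y z : ℝ) : |x - y - z| ≤ |x| + |y| + |z| := by
  have h1 : |x - y| ≤ |x| + |y| := by
    rw [sub_eq_add_neg]
    exact (abs_add_le x (-y)).trans (by rw [abs_neg])
  have h2 : |x - y - z| ≤ |x - y| + |z| := by
    rw [sub_eq_add_neg (x - y)]
    exact (abs_add_le (x - y) (-z)).trans (by rw [abs_neg])
  linarith

lemma defeat (n : ℕ) (f : C(K2, ℝ)) {ε : ℝ} (hε : 0 < ε) :
    ∃ g : C(K2, ℝ), dist g f ≤ ε ∧ g ∉ AA n := by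
  set a : ℝ := 1/(n+1) with hadef
  set c : ℝ := (n:ℝ)+1 with hcdef
  have ha0 : 0 < a := by positivity
  have hc0 : 0 < c := by positivity
  obtain ⟨P, L, hL0, hLip, hPf⟩ := lip_approx f (half_pos hε)
  set δ : ℝ := ε/2 with hδdef
  set δ' : ℝ := δ/4 with hδ'def
  have hδ0 : 0 < δ := half_pos hε
  have hδ'0 : 0 < δ' := by positivity
  obtain ⟨N, hN⟩ := exists_nat_ge (max (16*(L+c+1)/δ) (2/a))
  have hN2 : (2:ℝ)/a ≤ N := le_trans (le_max_right _ _) hN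
  have hN1 : 16*(L+c+1)/δ ≤ N := le_trans (le_max_left _ _) hN
  have hNpos : 0 < (N:ℝ) := lt_of_lt_of_le (by positivity) hN2
  obtain ⟨N', hN'⟩ := exists_nat_ge (max (16*(δ*N+L+c+1)/δ') (2/a))
  have hN'2 : (2:ℝ)/a ≤ N' := le_trans (le_max_right _ _) hN'
  have hN'1 : 16*(δ*N+L+c+1)/δ' ≤ N' := le_trans (le_max_left _ _) hN'
  have hN'pos : 0 < (N':ℝ) := lt_of_lt_of_le (by positivity) hN'2
  have h2Na : 2/(N:ℝ) ≤ a := by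
    rw [div_le_iff₀ hNpos]
    rw [div_le_iff₀ ha0] at hN2
    linarith
  have h2N'a : 2/(N':ℝ) ≤ a := by
    rw [div_le_iff₀ hN'pos]
    rw [div_le_iff₀ ha0] at hN'2
    linarith
  have hNδ : 16*(L+c+1) ≤ (N:ℝ)*δ := by
    rw [div_le_iff₀ hδ0] at hN1; linarith
  have hN'δ' : 16*(δ*N+L+c+1) ≤ (N':ℝ)*δ' := by
    rw [div_le_iff₀ hδ'0] at hN'1; linarith
  have hscont : Continuous fun q : K2 => δ * g0 ((N:ℝ) * q.1.1) + δ' * g0 ((N':ℝ) * q.2.1) := by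
    apply Continuous.add
    · exact (continuous_const.mul (g0_cont.comp (by fun_prop)))
    · exact (continuous_const.mul (g0_cont.comp (by fun_prop)))
  set s : C(K2, ℝ) := ⟨fun q => δ * g0 ((N:ℝ) * q.1.1) + δ' * g0 ((N':ℝ) * q.2.1), hscont⟩
    with hsdef
  set g : C(K2, ℝ) := P + s with hgdef
  have hsbound : ∀ x : K2, |s x| ≤ δ/2 + δ'/2 := by
    intro x
    have b1 : |δ * g0 ((N:ℝ) * x.1.1)| ≤ δ/2 := by
      rw [abs_mul, abs_of_pos hδ0]
      have := g0_le_half ((N:ℝ) * x.1.1)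
      have := g0_nonneg ((N:ℝ) * x.1.1)
      rw [abs_of_nonneg (by assumption)]
      nlinarith
    have b2 : |δ' * g0 ((N':ℝ) * x.2.1)| ≤ δ'/2 := by
      rw [abs_mul, abs_of_pos hδ'0]
      have := g0_le_half ((N':ℝ) * x.2.1)
      have := g0_nonneg ((N':ℝ) * x.2.1)
      rw [abs_of_nonneg (by assumption)]
      nlinarith
    calc |s x| ≤ |δ * g0 ((N:ℝ) * x.1.1)| + |δ' * g0 ((N':ℝ) * x.2.1)| := abs_add_le _ _
      _ ≤ δ/2 + δ'/2 := by linarith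
  refine ⟨g, ?_, ?_⟩
  · -- distance bound
    have h1 : dist g P ≤ ε/2 := by
      rw [ContinuousMap.dist_le (by positivity)]
      intro x
      rw [Real.dist_eq]
      have : g x - P x = s x := by
        simp [hgdef, ContinuousMap.add_apply]
      rw [this]
      have := hsbound x
      rw [hδ'def, hδdef] at this
      linarith
    calc dist g f ≤ dist g P + dist P f := dist_triangle g P f
      _ ≤ ε/2 + ε/2 := add_le_add h1 hPf
      _ = ε := by ring
  · -- g ∉ AA n
    rintro ⟨p, v, hv, r1, r2, hb⟩
    have hv1 : |v.1| ≤ 1 := (sq_le_one_iff_abs_le_one v.1).1 (by linarith [sq_nonneg v.2, hv])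
    have hv2 : |v.2| ≤ 1 := (sq_le_one_iff_abs_le_one v.2).1 (by linarith [sq_nonneg v.1, hv])
    by_cases hcase : 1/2 ≤ |v.1|
    · -- horizontal sawtooth wins
      obtain ⟨τ, hτ0, hτ2, hgap⟩ := reach ((N:ℝ) * p.1.1) v.1 hcase
      set h : ℝ := τ / N with hhdef
      have h0 : 0 < h := div_pos hτ0 hNpos
      have hhN : h * N = τ := div_mul_cancel₀ τ (ne_of_gt hNpos)
      have h2N : h ≤ 2 / N := by
        rw [hhdef]; gcongr
      have hha : h ≤ a := h2N.trans h2Na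
      have adm1 : p.1.1 + h * v.1 ∈ Icc (0:ℝ) 1 := seg p.1.2 r1 h0 hha
      have adm2 : p.2.1 + h * v.2 ∈ Icc (0:ℝ) 1 := seg p.2.2 r2 h0 hha
      set q : K2 := pt p v h with hqdef
      have hq1 : (q.1 : ℝ) = p.1.1 + h * v.1 := by
        rw [hqdef, pt, proj01_of_mem adm1]
      have hq2 : (q.2 : ℝ) = p.2.1 + h * v.2 := by
        rw [hqdef, pt, proj01_of_mem adm2]
      have hbnd := hb h h0 hha
      rw [← hqdef] at hbnd
      -- decompose
      set A1 : ℝ := g0 ((N:ℝ) * q.1.1) - g0 ((N:ℝ) * p.1.1) with hA1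
      set A2 : ℝ := g0 ((N':ℝ) * q.2.1) - g0 ((N':ℝ) * p.2.1) with hA2
      set AP : ℝ := P q - P p with hAP
      have hrepr : δ * A1 = (g q - g p) - AP - δ' * A2 := by
        simp only [hgdef, ContinuousMap.add_apply, hsdef, ContinuousMap.coe_mk, hA1, hA2, hAP]
        ring
      have hA1big : 1/4 ≤ |A1| := by
        have harg : (N:ℝ) * q.1.1 = (N:ℝ) * p.1.1 + τ * v.1 := by
          rw [hq1]; rw [← hhN]; ring
        rw [hA1, harg]
        rw [abs_sub_comm]
        rw [abs_sub_comm] at hgap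
        exact hgap
      have hA2small : |A2| ≤ 1/2 := by
        rw [hA2, abs_sub_le_iff]
        constructor
        · linarith [g0_le_half ((N':ℝ) * q.2.1), g0_nonneg ((N':ℝ) * p.2.1)]
        · linarith [g0_le_half ((N':ℝ) * p.2.1), g0_nonneg ((N':ℝ) * q.2.1)]
      have hdistqp : dist q p ≤ h := by
        rw [Prod.dist_eq]
        apply max_le
        · rw [Subtype.dist_eq, Real.dist_eq, hq1]
          rw [show p.1.1 + h * v.1 - p.1.1 = h * v.1 by ring, abs_mul, abs_of_pos h0]
          exact mul_le_of_le_one_right h0.le hv1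
        · rw [Subtype.dist_eq, Real.dist_eq, hq2]
          rw [show p.2.1 + h * v.2 - p.2.1 = h * v.2 by ring, abs_mul, abs_of_pos h0]
          exact mul_le_of_le_one_right h0.le hv2
      have hAPsmall : |AP| ≤ L * h := by
        calc |AP| ≤ L * dist q p := hLip q p
          _ ≤ L * h := mul_le_mul_of_nonneg_left hdistqp hL0
      -- combine
      have hA2' : |δ' * A2| ≤ δ' * (1/2) := by
        rw [abs_mul, abs_of_pos hδ'0]
        exact mul_le_mul_of_nonneg_left hA2small hδ'0.le
      have hA1' : δ * (1/4) ≤ |δ * A1| := by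
        rw [abs_mul, abs_of_pos hδ0]
        exact mul_le_mul_of_nonneg_left hA1big hδ0.le
      have htri : |δ * A1| ≤ |g q - g p| + |AP| + |δ' * A2| := by
        rw [hrepr]; exact abs_sub3 _ _ _
      have hkey : δ/8 ≤ (c + L) * h := by
        rw [hδ'def] at hA2'
        linarith [hbnd, htri, hAPsmall, hA1', hA2']
      -- contradiction
      have k1 : δ/8 * N ≤ (c+L) * h * N :=
        mul_le_mul_of_nonneg_right hkey hNpos.le
      have k2 : (c+L) * h * N = (c+L) * τ := by rw [mul_assoc, hhN]
      have k3 : (c+L) * τ ≤ (c+L) * 2 :=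
        mul_le_mul_of_nonneg_left hτ2 (by positivity)
      rw [k2] at k1
      have k4 : δ/8 * N ≤ (c+L) * 2 := k1.trans k3
      linarith [k4, hNδ]
    · -- vertical sawtooth wins
      have hcase2 : 1/2 ≤ |v.2| := by
        push_neg at hcase
        nlinarith [sq_abs v.1, sq_abs v.2, abs_nonneg v.1, abs_nonneg v.2]
      obtain ⟨τ, hτ0, hτ2, hgap⟩ := reach ((N':ℝ) * p.2.1) v.2 hcase2
      set h : ℝ := τ / N' with hhdef
      have h0 : 0 < h := div_pos hτ0 hN'pos
      have hhN : h * N' = τ := div_mul_cancel₀ τ (ne_of_gt hN'pos)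
      have h2N : h ≤ 2 / N' := by
        rw [hhdef]; gcongr
      have hha : h ≤ a := h2N.trans h2N'a
      have adm1 : p.1.1 + h * v.1 ∈ Icc (0:ℝ) 1 := seg p.1.2 r1 h0 hha
      have adm2 : p.2.1 + h * v.2 ∈ Icc (0:ℝ) 1 := seg p.2.2 r2 h0 hha
      set q : K2 := pt p v h with hqdef
      have hq1 : (q.1 : ℝ) = p.1.1 + h * v.1 := by
        rw [hqdef, pt, proj01_of_mem adm1]
      have hq2 : (q.2 : ℝ) = p.2.1 + h * v.2 := by
        rw [hqdef, pt, proj01_of_mem adm2]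
      have hbnd := hb h h0 hha
      rw [← hqdef] at hbnd
      set A1 : ℝ := g0 ((N:ℝ) * q.1.1) - g0 ((N:ℝ) * p.1.1) with hA1
      set A2 : ℝ := g0 ((N':ℝ) * q.2.1) - g0 ((N':ℝ) * p.2.1) with hA2
      set AP : ℝ := P q - P p with hAP
      have hrepr : δ' * A2 = (g q - g p) - AP - δ * A1 := by
        simp only [hgdef, ContinuousMap.add_apply, hsdef, ContinuousMap.coe_mk, hA1, hA2, hAP]
        ring
      have hA2big : 1/4 ≤ |A2| := by
        have harg : (N':ℝ) * q.2.1 = (N':ℝ) * p.2.1 + τ * v.2 := by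
          rw [hq2]; rw [← hhN]; ring
        rw [hA2, harg, abs_sub_comm]
        rw [abs_sub_comm] at hgap
        exact hgap
      have hA1small : |A1| ≤ (N:ℝ) * h := by
        have := g0_lip ((N:ℝ) * q.1.1) ((N:ℝ) * p.1.1)
        rw [← hA1] at this
        apply this.trans
        rw [hq1, show (N:ℝ) * (p.1.1 + h * v.1) - (N:ℝ) * p.1.1 = (N:ℝ) * h * v.1 by ring]
        rw [abs_mul, abs_of_pos (by positivity : (0:ℝ) < (N:ℝ) * h)]
        exact mul_le_of_le_one_right (by positivity) hv1
      have hdistqp : dist q p ≤ h := by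
        rw [Prod.dist_eq]
        apply max_le
        · rw [Subtype.dist_eq, Real.dist_eq, hq1]
          rw [show p.1.1 + h * v.1 - p.1.1 = h * v.1 by ring, abs_mul, abs_of_pos h0]
          exact mul_le_of_le_one_right h0.le hv1
        · rw [Subtype.dist_eq, Real.dist_eq, hq2]
          rw [show p.2.1 + h * v.2 - p.2.1 = h * v.2 by ring, abs_mul, abs_of_pos h0]
          exact mul_le_of_le_one_right h0.le hv2
      have hAPsmall : |AP| ≤ L * h := by
        calc |AP| ≤ L * dist q p := hLip q p
          _ ≤ L * h := mul_le_mul_of_nonneg_left hdistqp hL0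
      have hA1' : |δ * A1| ≤ δ * ((N:ℝ) * h) := by
        rw [abs_mul, abs_of_pos hδ0]
        exact mul_le_mul_of_nonneg_left hA1small hδ0.le
      have hA2' : δ' * (1/4) ≤ |δ' * A2| := by
        rw [abs_mul, abs_of_pos hδ'0]
        exact mul_le_mul_of_nonneg_left hA2big hδ'0.le
      have htri : |δ' * A2| ≤ |g q - g p| + |AP| + |δ * A1| := by
        rw [hrepr]; exact abs_sub3 _ _ _
      have hkey : δ'/4 ≤ (c + L + δ * N) * h := by
        linarith [hbnd, htri, hAPsmall, hA1', hA2']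
      have k1 : δ'/4 * N' ≤ (c + L + δ * N) * h * N' :=
        mul_le_mul_of_nonneg_right hkey hN'pos.le
      have k2 : (c + L + δ * N) * h * N' = (c + L + δ * N) * τ := by rw [mul_assoc, hhN]
      have k3 : (c + L + δ * N) * τ ≤ (c + L + δ * N) * 2 := by
        apply mul_le_mul_of_nonneg_left hτ2
        positivity
      rw [k2] at k1
      have k4 : δ'/4 * N' ≤ (c + L + δ * N) * 2 := k1.trans k3
      linarith [k4, hN'δ']

lemma AA_interior (n : ℕ) : interior (AA n) = ∅ := by
  rw [eq_empty_iff_forall_notMem]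
  intro f hf
  have hnhds : AA n ∈ nhds f := mem_interior_iff_mem_nhds.mp hf
  rw [Metric.mem_nhds_iff] at hnhds
  obtain ⟨r, hr0, hball⟩ := hnhds
  obtain ⟨g, hgf, hgnot⟩ := defeat n f (half_pos hr0)
  exact hgnot (hball (show g ∈ Metric.ball f r by
    rw [Metric.mem_ball]
    exact lt_of_le_of_lt hgf (by linarith)))

lemma AA_meagre (n : ℕ) : IsMeagre (AA n) := by
  rw [isMeagre_iff_countable_union_isNowhereDense]
  refine ⟨{AA n}, ?_, countable_singleton _, by simp⟩
  intro t ht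
  rw [mem_singleton_iff] at ht
  subst ht
  exact (AA_closed n).isNowhereDense_iff.mpr (AA_interior n)

lemma cover :
    {f : C(K2, ℝ) |
      ∀ p : K2, ∀ v1 v2 : ℝ, v1 ^ 2 + v2 ^ 2 = 1 →
        ¬ ∃ L : ℝ,
          (nhdsWithin (0:ℝ)
            {h | 0 < h ∧ (p.1.1 + h * v1) ∈ Icc (0:ℝ) 1 ∧ (p.2.1 + h * v2) ∈ Icc (0:ℝ) 1}).NeBot ∧
          Tendsto (fun h : ℝ =>
              if hmem : (p.1.1 + h * v1) ∈ Icc (0:ℝ) 1 ∧ (p.2.1 + h * v2) ∈ Icc (0:ℝ) 1 then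
                (f (⟨p.1.1 + h * v1, hmem.1⟩, ⟨p.2.1 + h * v2, hmem.2⟩) - f p) / h
              else 0)
            (nhdsWithin (0:ℝ)
              {h | 0 < h ∧ (p.1.1 + h * v1) ∈ Icc (0:ℝ) 1 ∧ (p.2.1 + h * v2) ∈ Icc (0:ℝ) 1})
            (nhds L)}ᶜ ⊆ ⋃ n, AA n := by
  intro f hf
  simp only [mem_compl_iff, mem_setOf_eq] at hf
  push_neg at hf
  obtain ⟨p, v1, v2, hv, L, hne, htend⟩ := hf
  set S : Set ℝ :=
    {h | 0 < h ∧ (p.1.1 + h * v1) ∈ Icc (0:ℝ) 1 ∧ (p.2.1 + h * v2) ∈ Icc (0:ℝ) 1} with hSdef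
  have hS : S.Nonempty := by
    by_contra hSe
    rw [not_nonempty_iff_eq_empty] at hSe
    rw [hSe, nhdsWithin_empty] at hne
    exact not_neBot.2 rfl hne
  obtain ⟨h0, hh0pos, hadm1, hadm2⟩ := hS
  rw [Metric.tendsto_nhdsWithin_nhds] at htend
  obtain ⟨δ, hδ0, hδ⟩ := htend 1 one_pos
  obtain ⟨n1, hn1⟩ := exists_nat_one_div_lt (lt_min hh0pos hδ0)
  obtain ⟨n2, hn2⟩ := exists_nat_ge |L|
  set n := max n1 n2 with hndef
  have hcast : (1:ℝ)/((n:ℝ)+1) ≤ 1/((n1:ℝ)+1) := by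
    apply one_div_le_one_div_of_le (by positivity)
    have : (n1:ℝ) ≤ (n:ℝ) := by exact_mod_cast le_max_left n1 n2
    linarith
  have han : (1:ℝ)/((n:ℝ)+1) < min h0 δ := lt_of_le_of_lt hcast hn1
  have ha0 : (0:ℝ) < 1/((n:ℝ)+1) := by positivity
  have hah0 : (1:ℝ)/((n:ℝ)+1) ≤ h0 := le_of_lt (lt_of_lt_of_le han (min_le_left _ _))
  have haδ : (1:ℝ)/((n:ℝ)+1) < δ := lt_of_lt_of_le han (min_le_right _ _)
  refine mem_iUnion.2 ⟨n, p, (v1, v2), hv, ?_, ?_, ?_⟩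
  · exact seg p.1.2 hadm1 ha0 hah0
  · exact seg p.2.2 hadm2 ha0 hah0
  · intro h hpos hha
    have hhh0 : h ≤ h0 := hha.trans hah0
    have adm1h : p.1.1 + h * v1 ∈ Icc (0:ℝ) 1 := seg p.1.2 hadm1 hpos hhh0
    have adm2h : p.2.1 + h * v2 ∈ Icc (0:ℝ) 1 := seg p.2.2 hadm2 hpos hhh0
    have hhS : h ∈ S := ⟨hpos, adm1h, adm2h⟩
    have hdist : dist h 0 < δ := by
      rw [Real.dist_eq, sub_zero, abs_of_pos hpos]
      exact lt_of_le_of_lt hha haδ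
    have hclose := hδ hhS hdist
    rw [dif_pos ⟨adm1h, adm2h⟩] at hclose
    set q : K2 := (⟨p.1.1 + h * v1, adm1h⟩, ⟨p.2.1 + h * v2, adm2h⟩) with hqdef
    have hptq : pt p (v1, v2) h = q := by
      rw [hqdef, pt]
      exact Prod.ext (proj01_of_mem adm1h) (proj01_of_mem adm2h)
    rw [hptq]
    rw [Real.dist_eq] at hclose
    have h1 : |(f q - f p)/h| < |L| + 1 := by
      calc |(f q - f p)/h| = |(f q - f p)/h - L + L| := by ring_nf
        _ ≤ |(f q - f p)/h - L| + |L| := abs_add_le _ _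
        _ < 1 + |L| := by linarith
        _ = |L| + 1 := by ring
    have h2 : |f q - f p| < (|L| + 1) * h := by
      have hrw : f q - f p = ((f q - f p)/h) * h := by field_simp
      rw [hrw, abs_mul, abs_of_pos hpos]
      exact mul_lt_mul_of_pos_right h1 hpos
    have h3 : |L| + 1 ≤ (n:ℝ) + 1 := by
      have : (n2:ℝ) ≤ (n:ℝ) := by exact_mod_cast le_max_right n1 n2
      linarith
    have h4 : (|L| + 1) * h ≤ ((n:ℝ) + 1) * h := mul_le_mul_of_nonneg_right h3 hpos.le
    linarith

end S18

open S18 in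
/-- The set of nowhere differentiable functions on `[0,1]²` — continuous functions having no
finite one-sided directional derivative at any point along any unit vector (along which the
square is approachable) — is comeager in `C([0,1]²)`. -/
theorem stmt18 :
    {f : C(Icc (0:ℝ) 1 × Icc (0:ℝ) 1, ℝ) |
      ∀ p : Icc (0:ℝ) 1 × Icc (0:ℝ) 1, ∀ v1 v2 : ℝ, v1 ^ 2 + v2 ^ 2 = 1 →
        ¬ ∃ L : ℝ,
          (nhdsWithin (0:ℝ)
            {h | 0 < h ∧ (p.1.1 + h * v1) ∈ Icc (0:ℝ) 1 ∧ (p.2.1 + h * v2) ∈ Icc (0:ℝ) 1}).NeBot ∧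
          Tendsto (fun h : ℝ =>
              if hmem : (p.1.1 + h * v1) ∈ Icc (0:ℝ) 1 ∧ (p.2.1 + h * v2) ∈ Icc (0:ℝ) 1 then
                (f (⟨p.1.1 + h * v1, hmem.1⟩, ⟨p.2.1 + h * v2, hmem.2⟩) - f p) / h
              else 0)
            (nhdsWithin (0:ℝ)
              {h | 0 < h ∧ (p.1.1 + h * v1) ∈ Icc (0:ℝ) 1 ∧ (p.2.1 + h * v2) ∈ Icc (0:ℝ) 1})
            (nhds L)}
      ∈ residual C(Icc (0:ℝ) 1 × Icc (0:ℝ) 1, ℝ) := by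
  have hmeagre : IsMeagre (⋃ n, AA n) := isMeagre_iUnion AA_meagre
  have h2 := hmeagre.mono cover
  rw [IsMeagre, compl_compl] at h2
  exact h2
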